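/- Let A be an m×n array whose primitive root has dimension p×q. If row i of A (as a word of length n) has primitive root of length ℓ_i, then q = lcm(ℓ_0, ℓ_1, …, ℓ_{m-1}); similarly, if column j has primitive root of length c_j, then p = lcm(c_0, …, c_{n-1}). -/
import Mathlib


/-- k-fold concatenation (power) of a word. -/
def wpow {σ : Type*} (z : List σ) (k : ℕ) : List σ := (List.replicate k z).flatten

/-- A nonempty word is primitive if it is not a proper power. -/
def WPrimitive {σ : Type*} (w : List σ) : Prop :=
  w ≠ [] ∧ ∀ (v : List σ) (e : ℕ), 2 ≤ e → w ≠ wpow v e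

theorem fin_pos_of_mul {p m : ℕ} (i : Fin (p * m)) : 0 < m :=
  Nat.pos_of_ne_zero fun h => absurd i.isLt (by simp [h])

/-- `arrRep A p q` is `A^{p×q}`: the array `A` repeated in `p` rows and `q` columns. -/
def arrRep {σ : Type*} {m n : ℕ} (A : Fin m × Fin n → σ) (p q : ℕ) :
    Fin (p * m) × Fin (q * n) → σ :=
  fun x => A (⟨x.1.val % m, Nat.mod_lt _ (fin_pos_of_mul x.1)⟩,
              ⟨x.2.val % n, Nat.mod_lt _ (fin_pos_of_mul x.2)⟩)

/-- Equality of arrays of possibly (syntactically) different dimensions. -/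
def arrEq {σ : Type*} {m n m' n' : ℕ} (A : Fin m × Fin n → σ)
    (B : Fin m' × Fin n' → σ) : Prop :=
  m = m' ∧ n = n' ∧ ∀ (i j : ℕ) (h1 : i < m) (h2 : j < n) (h1' : i < m') (h2' : j < n'),
    A (⟨i, h1⟩, ⟨j, h2⟩) = B (⟨i, h1'⟩, ⟨j, h2'⟩)

/-- An array is primitive if it is not a nontrivial `p×q` repetition of another array. -/
def ArrPrimitive {σ : Type*} {m n : ℕ} (M : Fin m × Fin n → σ) : Prop :=
  ∀ (m' n' p q : ℕ) (A : Fin m' × Fin n' → σ), 0 < p → 0 < q →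
    arrEq M (arrRep A p q) → p = 1 ∧ q = 1

/-- Horizontal concatenation of arrays with equal numbers of rows. -/
def hcat {σ : Type*} {m1 m2 n1 n2 : ℕ} (h : m1 = m2)
    (A : Fin m1 × Fin n1 → σ) (B : Fin m2 × Fin n2 → σ) :
    Fin m1 × Fin (n1 + n2) → σ :=
  fun x => if hn : x.2.val < n1 then A (x.1, ⟨x.2.val, hn⟩)
           else B (⟨x.1.val, h ▸ x.1.isLt⟩, ⟨x.2.val - n1, by have := x.2.isLt; omega⟩)

/-- Vertical concatenation of arrays with equal numbers of columns. -/
def vcat {σ : Type*} {m1 m2 n1 n2 : ℕ} (h : n1 = n2)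
    (A : Fin m1 × Fin n1 → σ) (B : Fin m2 × Fin n2 → σ) :
    Fin (m1 + m2) × Fin n1 → σ :=
  fun x => if hm : x.1.val < m1 then A (⟨x.1.val, hm⟩, x.2)
           else B (⟨x.1.val - m1, by have := x.1.isLt; omega⟩, ⟨x.2.val, h ▸ x.2.isLt⟩)

/-- The word over the alphabet of columns corresponding to an array. -/
def colWord {σ : Type*} {m n : ℕ} (A : Fin m × Fin n → σ) : List (Fin m → σ) :=
  List.ofFn fun j => fun i => A (i, j)

/-- Row `i` of an array, as a word. -/
def rowWord {σ : Type*} {m n : ℕ} (A : Fin m × Fin n → σ) (i : Fin m) : List σ :=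
  List.ofFn fun j => A (i, j)

/-- Column `j` of an array, as a word. -/
def colAt {σ : Type*} {m n : ℕ} (A : Fin m × Fin n → σ) (j : Fin n) : List σ :=
  List.ofFn fun i => A (i, j)

/-- Row-major reading of an array. -/
def rowMajor {σ : Type*} {m n : ℕ} (A : Fin m × Fin n → σ) : List σ :=
  (List.ofFn fun i => rowWord A i).flatten

/-- `{x,y}*`: words that are concatenations of copies of `x` and `y`. -/
def InStar {σ : Type*} (x y w : List σ) : Prop :=
  ∃ L : List (List σ), (∀ u ∈ L, u = x ∨ u = y) ∧ w = L.flatten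



-- Auxiliary lemmas
theorem wpow_succ {σ : Type*} (z : List σ) (k : ℕ) : wpow z (k+1) = z ++ wpow z k := by
  simp [wpow, List.replicate_succ]

theorem wpow_length {σ : Type*} (z : List σ) (k : ℕ) : (wpow z k).length = k * z.length := by
  induction k with
  | zero => simp [wpow]
  | succ k ih => rw [wpow_succ]; simp [ih]; ring

theorem wpow_getElem {σ : Type*} (z : List σ) (hz : 0 < z.length) (k t : ℕ)
    (ht : t < k * z.length) :
    (wpow z k)[t]'(by rw [wpow_length]; exact ht) = z[t % z.length]'(Nat.mod_lt _ hz) := by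
  induction k generalizing t with
  | zero => omega
  | succ k ih =>
    have hkk : (k+1) * z.length = k * z.length + z.length := by ring
    simp only [wpow_succ]
    by_cases h : t < z.length
    · rw [List.getElem_append_left h]
      congr 1
      exact (Nat.mod_eq_of_lt h).symm
    · push_neg at h
      rw [List.getElem_append_right (by omega)]
      have h2 : t - z.length < k * z.length := by omega
      rw [ih (t - z.length) h2]
      congr 1
      conv_rhs => rw [Nat.mod_eq_sub_mod h]

theorem eq_wpow_of_getElem {σ : Type*} {w z : List σ} {k : ℕ} (hz : 0 < z.length)
    (hlen : w.length = k * z.length)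
    (hget : ∀ t (ht : t < w.length), w[t] = z[t % z.length]'(Nat.mod_lt _ hz)) :
    w = wpow z k := by
  apply List.ext_getElem (by rw [wpow_length, hlen])
  intro t h1 h2
  rw [hget t h1, wpow_getElem z hz k t (by omega)]

/-- period gcd -/
theorem gcd_period {σ : Type*} {N a b : ℕ} (hN : 0 < N) (ha : a ∣ N) (hb : b ∣ N)
    (f : ℕ → σ) (hfa : ∀ t, t < N → f t = f (t % a)) (hfb : ∀ t, t < N → f t = f (t % b)) :
    ∀ t, t < N → f t = f (t % Nat.gcd a b) := by
  have ha0 : 0 < a := Nat.pos_of_dvd_of_pos ha hN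
  have hb0 : 0 < b := Nat.pos_of_dvd_of_pos hb hN
  haveI : NeZero N := ⟨hN.ne'⟩
  set F : ZMod N → σ := fun x => f x.val with hF
  have hval : ∀ t, t < N → (t : ZMod N).val = t := fun t ht => ZMod.val_natCast_of_lt ht
  have key : ∀ (d : ℕ), d ∣ N → (∀ t, t < N → f t = f (t % d)) →
      ∀ x : ZMod N, F (x + d) = F x := by
    intro d hd hfd x
    have hd0 : 0 < d := Nat.pos_of_dvd_of_pos hd hN
    have h1 : (x + d).val = (x.val + d) % N := by
      rw [ZMod.val_add, ZMod.val_natCast]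
      conv_rhs => rw [Nat.add_mod]
      rw [Nat.mod_eq_of_lt x.val_lt]
    have h2 : ((x.val + d) % N) % d = x.val % d := by
      rw [Nat.mod_mod_of_dvd _ hd, Nat.add_mod_right]
    have hx : x.val < N := x.val_lt
    show f (x + d : ZMod N).val = f x.val
    rw [h1, hfd _ (Nat.mod_lt _ hN), h2, ← hfd _ hx]
  -- the subgroup of periods
  set S : AddSubgroup (ZMod N) :=
    { carrier := {s | ∀ x, F (x + s) = F x}
      zero_mem' := by intro x; simp
      add_mem' := by intro s t hs ht x; rw [← add_assoc, ht, hs]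
      neg_mem' := by intro s hs x; rw [← hs (x + -s)]; ring_nf } with hS
  have haS : (a : ZMod N) ∈ S := key a ha hfa
  have hbS : (b : ZMod N) ∈ S := key b hb hfb
  have hg : ((Nat.gcd a b : ℕ) : ZMod N) ∈ S := by
    have hbez : (Nat.gcd a b : ℤ) = a * Nat.gcdA a b + b * Nat.gcdB a b := Nat.gcd_eq_gcd_ab a b
    have : ((Nat.gcd a b : ℕ) : ZMod N) =
        Nat.gcdA a b • (a : ZMod N) + Nat.gcdB a b • (b : ZMod N) := by
      have := congrArg (fun z : ℤ => (z : ZMod N)) hbez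
      push_cast at this
      rw [this]
      simp [zsmul_eq_mul]
      ring
    rw [this]
    exact S.add_mem (S.zsmul_mem haS _) (S.zsmul_mem hbS _)
  intro t ht
  set g := Nat.gcd a b with hgdef
  have hg0 : 0 < g := Nat.gcd_pos_of_pos_left _ ha0
  have hgN : g ≤ N := Nat.le_of_dvd hN (dvd_trans (Nat.gcd_dvd_left a b) ha)
  have hinv : ∀ s ∈ S, ∀ x, F (x + s) = F x := fun s hs => hs
  have hsplit : (t : ZMod N) = ((t % g : ℕ) : ZMod N) + (t/g) • ((g : ℕ) : ZMod N) := by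
    have h3 : t = t % g + (t/g) * g := (Nat.mod_add_div' t g).symm
    conv_lhs => rw [h3]
    push_cast [nsmul_eq_mul]
    ring
  have e1 : f t = F (t : ZMod N) := by simp only [hF]; rw [hval t ht]
  have e2 : f (t % g) = F ((t % g : ℕ) : ZMod N) := by
    simp only [hF]; rw [hval _ (lt_of_lt_of_le (Nat.mod_lt _ hg0) hgN)]
  rw [e1, e2, hsplit, hinv _ (S.nsmul_mem hg _)]

theorem rowWord_length {σ : Type*} {m n : ℕ} (A : Fin m × Fin n → σ) (i : Fin m) :
    (rowWord A i).length = n := by simp [rowWord]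

theorem rowWord_getElem {σ : Type*} {m n : ℕ} (A : Fin m × Fin n → σ) (i : Fin m)
    (t : ℕ) (ht : t < n) :
    (rowWord A i)[t]'(by rw [rowWord_length]; exact ht) = A (i, ⟨t, ht⟩) := by
  simp [rowWord]

/-- Main one-sided lemma. -/
theorem main_row {σ : Type*} {m n p q : ℕ} (hm : 0 < m) (hn : 0 < n)
    (A : Fin m × Fin n → σ) (P : Fin p × Fin q → σ) (hP : ArrPrimitive P)
    (i j : ℕ) (hi : 0 < i) (hj : 0 < j) (hroot : arrEq A (arrRep P i j))
    (ℓ : Fin m → ℕ)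
    (hrow : ∀ i0 : Fin m, ∃ z : List σ, WPrimitive z ∧ z.length = ℓ i0 ∧
      ∃ e : ℕ, 0 < e ∧ rowWord A i0 = wpow z e) :
    q = Finset.univ.lcm ℓ := by
  obtain ⟨hm', hn', hE⟩ := hroot
  have hq0 : 0 < q := by rcases Nat.eq_zero_or_pos q with h | h; · subst h; simp at hn'; omega
                         · exact h
  have hp0 : 0 < p := by rcases Nat.eq_zero_or_pos p with h | h; · subst h; simp at hm'; omega
                         · exact h
  have hqn : q ≤ n := by rw [hn']; exact Nat.le_mul_of_pos_left q hj
  have hpm : p ≤ m := by rw [hm']; exact Nat.le_mul_of_pos_left p hi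
  have hAP : ∀ (a b : ℕ) (h1 : a < m) (h2 : b < n),
      A (⟨a, h1⟩, ⟨b, h2⟩) = P (⟨a % p, Nat.mod_lt _ hp0⟩, ⟨b % q, Nat.mod_lt _ hq0⟩) := by
    intro a b h1 h2
    rw [hE a b h1 h2 (hm' ▸ h1) (hn' ▸ h2)]
    rfl
  -- values of a row in terms of its primitive root
  have hrowval : ∀ (i0 : Fin m) (z : List σ) (e : ℕ) (hz0 : 0 < z.length)
      (hwe : rowWord A i0 = wpow z e) (t : ℕ) (ht : t < n),
      A (i0, ⟨t, ht⟩) = z[t % z.length]'(Nat.mod_lt _ hz0) := by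
    intro i0 z e hz0 hwe t ht
    have hlen : n = e * z.length := by
      rw [← wpow_length z e, ← hwe, rowWord_length]
    rw [← rowWord_getElem A i0 t ht, List.getElem_of_eq hwe]
    exact wpow_getElem z hz0 e t (by omega)
  -- each row root length divides q
  have hdvd : ∀ i0 : Fin m, ℓ i0 ∣ q := by
    intro i0
    obtain ⟨z, hzprim, hzlen, e, he, hwe⟩ := hrow i0
    have hz0 : 0 < z.length := List.length_pos_iff.mpr hzprim.1
    have hlen : n = e * z.length := by
      rw [← wpow_length z e, ← hwe, rowWord_length]
    have hzn : z.length ≤ n := by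
      rw [hlen]; exact Nat.le_mul_of_pos_left _ he
    set f : ℕ → σ := fun t => if h : t < n then A (i0, ⟨t, h⟩) else A (i0, ⟨0, hn⟩) with hf
    have hfval : ∀ t (ht : t < n), f t = A (i0, ⟨t, ht⟩) := by
      intro t ht; simp [hf, ht]
    have hfa : ∀ t, t < n → f t = f (t % z.length) := by
      intro t ht
      have h2 : t % z.length < n := lt_of_lt_of_le (Nat.mod_lt _ hz0) hzn
      rw [hfval t ht, hfval _ h2, hrowval i0 z e hz0 hwe t ht,
        hrowval i0 z e hz0 hwe _ h2]
      congr 1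
      exact (Nat.mod_mod_of_dvd t (dvd_refl z.length)).symm
    have hfb : ∀ t, t < n → f t = f (t % q) := by
      intro t ht
      have h2 : t % q < n := lt_of_lt_of_le (Nat.mod_lt _ hq0) hqn
      rw [hfval t ht, hfval _ h2, hAP i0.1 t i0.2 ht, hAP i0.1 _ i0.2 h2]
      congr 2
      exact Fin.ext (Nat.mod_mod_of_dvd t (dvd_refl q)).symm
    have hper := gcd_period hn ⟨e, by rw [hlen, mul_comm]⟩ ⟨j, by rw [hn', mul_comm]⟩ f hfa hfb
    set g := Nat.gcd z.length q with hg
    have hg0 : 0 < g := Nat.gcd_pos_of_pos_left _ hz0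
    have hgl : g ∣ z.length := Nat.gcd_dvd_left _ _
    have hgle : g ≤ z.length := Nat.le_of_dvd hz0 hgl
    -- z is a power of its prefix of length g
    set u := z.take g with hu
    have hul : u.length = g := by simp [hu, min_eq_left hgle]
    have hu0 : 0 < u.length := by omega
    have hzu : z = wpow u (z.length / g) := by
      apply eq_wpow_of_getElem hu0
      · rw [hul, Nat.div_mul_cancel hgl]
      · intro t ht
        have h1 : t % u.length < g := by rw [hul]; exact Nat.mod_lt _ hg0
        have e1 : u[t % u.length]'(Nat.mod_lt _ hu0) = z[t % g]'(lt_of_lt_of_le (Nat.mod_lt _ hg0) hgle) := by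
          simp only [hu, List.getElem_take]
          congr 1
          rw [hul]
        have hzf : ∀ s (hs : s < z.length), z[s] = f s := by
          intro s hs
          have hsn : s < n := lt_of_lt_of_le hs hzn
          rw [hfval s hsn, hrowval i0 z e hz0 hwe s hsn]
          congr 1
          exact (Nat.mod_eq_of_lt hs).symm
        rw [hzf t ht, hper t (lt_of_lt_of_le ht hzn), e1,
          hzf (t % g) (lt_of_lt_of_le (Nat.mod_lt _ hg0) hgle)]
    have hgeq : g = z.length := by
      by_contra hne
      have h2 : 2 ≤ z.length / g := by
        have := Nat.div_mul_cancel hgl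
        rcases Nat.lt_or_ge (z.length / g) 2 with h | h
        · interval_cases h' : z.length / g <;> omega
        · exact h
      exact hzprim.2 u _ h2 hzu
    rw [← hzlen, ← hgeq]
    exact Nat.gcd_dvd_right _ _
  -- L := lcm divides q
  set L := Finset.univ.lcm ℓ with hL
  have hLq : L ∣ q := Finset.lcm_dvd fun i0 _ => hdvd i0
  have hL0 : 0 < L := Nat.pos_of_dvd_of_pos hLq hq0
  have hLle : L ≤ q := Nat.le_of_dvd hq0 hLq
  -- every row of P has period L
  have hper2 : ∀ (a b : ℕ) (ha : a < p) (hb : b < q),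
      P (⟨a, ha⟩, ⟨b, hb⟩) = P (⟨a, ha⟩, ⟨b % L, lt_of_lt_of_le (Nat.mod_lt _ hL0) hLle⟩) := by
    intro a b ha hb
    have ham : a < m := lt_of_lt_of_le ha hpm
    have hbn : b < n := lt_of_lt_of_le hb hqn
    have hbLn : b % L < n := lt_of_lt_of_le (lt_of_lt_of_le (Nat.mod_lt _ hL0) hLle) hqn
    obtain ⟨z, hzprim, hzlen, e, he, hwe⟩ := hrow ⟨a, ham⟩
    have hz0 : 0 < z.length := List.length_pos_iff.mpr hzprim.1
    have hdL : z.length ∣ L := hzlen ▸ Finset.dvd_lcm (Finset.mem_univ (⟨a, ham⟩ : Fin m))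
    have e1 := hAP a b ham hbn
    have e2 := hAP a (b % L) ham hbLn
    have e3 := hrowval ⟨a, ham⟩ z e hz0 hwe b hbn
    have e4 := hrowval ⟨a, ham⟩ z e hz0 hwe (b % L) hbLn
    have hmods : (⟨a % p, Nat.mod_lt _ hp0⟩ : Fin p) = ⟨a, ha⟩ := Fin.ext (Nat.mod_eq_of_lt ha)
    have hmodq : (⟨b % q, Nat.mod_lt _ hq0⟩ : Fin q) = ⟨b, hb⟩ := Fin.ext (Nat.mod_eq_of_lt hb)
    have hmodq2 : (⟨b % L % q, Nat.mod_lt _ hq0⟩ : Fin q)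
        = ⟨b % L, lt_of_lt_of_le (Nat.mod_lt _ hL0) hLle⟩ :=
      Fin.ext (Nat.mod_eq_of_lt (lt_of_lt_of_le (Nat.mod_lt _ hL0) hLle))
    rw [hmods, hmodq] at e1
    rw [hmods, hmodq2] at e2
    rw [← e1, ← e2, e3, e4]
    congr 1
    exact (Nat.mod_mod_of_dvd b hdL).symm
  -- P is a horizontal power of its first L columns
  set Q : Fin p × Fin L → σ := fun x => P (x.1, ⟨x.2.1, lt_of_lt_of_le x.2.2 hLle⟩) with hQ
  have harr : arrEq P (arrRep Q 1 (q / L)) := by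
    refine ⟨(one_mul p).symm, (Nat.div_mul_cancel hLq).symm, ?_⟩
    intro a b h1 h2 h1' h2'
    show P (⟨a, h1⟩, ⟨b, h2⟩)
        = P (⟨a % p, Nat.mod_lt _ hp0⟩, ⟨b % L, lt_of_lt_of_le (Nat.mod_lt _ hL0) hLle⟩)
    rw [show (⟨a % p, Nat.mod_lt _ hp0⟩ : Fin p) = ⟨a, h1⟩ from Fin.ext (Nat.mod_eq_of_lt h1)]
    exact hper2 a b h1 h2
  obtain ⟨-, hqL⟩ := hP p L 1 (q / L) Q one_pos
    (Nat.div_pos hLle hL0) harr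
  have hqLL := Nat.div_mul_cancel hLq
  rw [hqL, one_mul] at hqLL
  exact hqLL.symm


def arrTr {σ : Type*} {m n : ℕ} (A : Fin m × Fin n → σ) : Fin n × Fin m → σ :=
  fun x => A (x.2, x.1)

theorem arrEq_tr {σ : Type*} {m n m' n' : ℕ} {A : Fin m × Fin n → σ}
    {B : Fin m' × Fin n' → σ} (h : arrEq A B) : arrEq (arrTr A) (arrTr B) := by
  obtain ⟨h1, h2, h3⟩ := h
  exact ⟨h2, h1, fun a b ha hb ha' hb' => h3 b a hb ha hb' ha'⟩

theorem tr_arrRep {σ : Type*} {p q : ℕ} (P : Fin p × Fin q → σ) (i j : ℕ) :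
    arrTr (arrRep P i j) = arrRep (arrTr P) j i := rfl

theorem arrPrimitive_tr {σ : Type*} {p q : ℕ} {P : Fin p × Fin q → σ}
    (hP : ArrPrimitive P) : ArrPrimitive (arrTr P) := by
  intro m' n' pp qq B hpp hqq hEq
  have h2 := arrEq_tr hEq
  rw [tr_arrRep] at h2
  obtain ⟨ha, hb⟩ := hP _ _ qq pp (arrTr B) hqq hpp h2
  exact ⟨hb, ha⟩

theorem colAt_eq_rowWord_tr {σ : Type*} {m n : ℕ} (A : Fin m × Fin n → σ) (j : Fin n) :
    colAt A j = rowWord (arrTr A) j := rfl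

theorem stmt16 {σ : Type*} {m n p q : ℕ} (hm : 0 < m) (hn : 0 < n)
    (A : Fin m × Fin n → σ) (P : Fin p × Fin q → σ) (hP : ArrPrimitive P)
    (i j : ℕ) (hi : 0 < i) (hj : 0 < j) (hroot : arrEq A (arrRep P i j))
    (ℓ : Fin m → ℕ) (c : Fin n → ℕ)
    (hrow : ∀ i0 : Fin m, ∃ z : List σ, WPrimitive z ∧ z.length = ℓ i0 ∧
      ∃ e : ℕ, 0 < e ∧ rowWord A i0 = wpow z e)
    (hcol : ∀ j0 : Fin n, ∃ z : List σ, WPrimitive z ∧ z.length = c j0 ∧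
      ∃ e : ℕ, 0 < e ∧ colAt A j0 = wpow z e) :
    q = Finset.univ.lcm ℓ ∧ p = Finset.univ.lcm c := by
  constructor
  · exact main_row hm hn A P hP i j hi hj hroot ℓ hrow
  · have hroot' : arrEq (arrTr A) (arrRep (arrTr P) j i) := by
      have h := arrEq_tr hroot
      rwa [tr_arrRep] at h
    have hrow' : ∀ j0 : Fin n, ∃ z : List σ, WPrimitive z ∧ z.length = c j0 ∧
        ∃ e : ℕ, 0 < e ∧ rowWord (arrTr A) j0 = wpow z e := fun j0 => by
      rw [← colAt_eq_rowWord_tr]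
      exact hcol j0
    exact main_row hn hm (arrTr A) (arrTr P) (arrPrimitive_tr hP) j i hj hi hroot' c hrow'
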